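/- Let X and Y be independent exponential random variables with rate 1 (the case m = 1 of the Nakagami model). Then for any A > 0, E[ln(1 + (1/A)·XY)] = −∫_0^∞ x^{−2} exp(A x − 1/x) · Ei(−A x) dx, where Ei is the exponential integral. In particular, the intermediate step holds: ∫_0^∞ exp(−c z)/(z+1) dz = −exp(c)·Ei(−c) for any c > 0. -/

import Mathlib

open MeasureTheory ProbabilityTheory Set

/-- Exponential integral Ei, for negative arguments: Ei(x) = -∫_{-x}^∞ e^{-t}/t dt. -/
noncomputable def Ei (x : ℝ) : ℝ := -∫ t in Ioi (-x), Real.exp (-t) / t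

/-- Exponential(1) density on (0,∞). -/
noncomputable def expDensity (x : ℝ) : ℝ := if 0 < x then Real.exp (-x) else 0


lemma lemA (c : ℝ) (hc : 0 < c) :
    ∫ z in Ioi (0:ℝ), Real.exp (-(c * z)) / (z + 1) = -Real.exp c * Ei (-c) := by
  have hEi : Ei (-c) = -∫ t in Ioi c, Real.exp (-t) / t := by simp [Ei]
  have himg : (fun z => c * (z + 1)) '' Ioi (0:ℝ) = Ioi c := by
    ext t
    constructor
    · rintro ⟨z, hz, rfl⟩
      simp only [mem_Ioi] at hz ⊢
      nlinarith
    · intro ht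
      simp only [mem_Ioi] at ht
      refine ⟨t / c - 1, ?_, by field_simp; ring⟩
      simpa [mem_Ioi, sub_pos] using (one_lt_div hc).mpr ht
  have hderiv : ∀ z ∈ Ioi (0:ℝ), HasDerivWithinAt (fun z => c * (z + 1)) c (Ioi 0) z := by
    intro z _
    simpa using (((hasDerivAt_id z).add_const 1).const_mul c).hasDerivWithinAt
  have hinj : InjOn (fun z => c * (z + 1)) (Ioi 0) := by
    intro a _ b _ h
    simp only at h
    have := mul_left_cancel₀ hc.ne' h
    linarith
  have hcov := integral_image_eq_integral_abs_deriv_smul measurableSet_Ioi hderiv hinj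
      (fun t => Real.exp (-t) / t)
  rw [himg] at hcov
  have : ∫ z in Ioi (0:ℝ), |c| • (Real.exp (-(c * (z + 1))) / (c * (z + 1)))
      = ∫ z in Ioi (0:ℝ), Real.exp (-c) * (Real.exp (-(c * z)) / (z + 1)) := by
    refine setIntegral_congr_fun measurableSet_Ioi (fun z hz => ?_)
    simp only [mem_Ioi] at hz
    rw [abs_of_pos hc, smul_eq_mul]
    rw [show -(c * (z + 1)) = -(c*z) + -c by ring, Real.exp_add]
    field_simp
  rw [this, integral_const_mul] at hcov
  rw [hEi, hcov]
  rw [show -Real.exp c * -(Real.exp (-c) * ∫ z in Ioi (0:ℝ), Real.exp (-(c * z)) / (z + 1))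
      = (Real.exp c * Real.exp (-c)) * ∫ z in Ioi (0:ℝ), Real.exp (-(c * z)) / (z + 1) by ring]
  rw [← Real.exp_add]
  simp

lemma int_xexp : IntegrableOn (fun y : ℝ => y * Real.exp (-y)) (Ioi 0) := by
  have h := Real.GammaIntegral_convergent (s := 2) (by norm_num)
  refine h.congr_fun (fun x hx => ?_) measurableSet_Ioi
  simp only [mem_Ioi] at hx
  beta_reduce
  rw [show (2:ℝ) - 1 = 1 by norm_num, Real.rpow_one, mul_comm]

lemma int_exp : IntegrableOn (fun y : ℝ => Real.exp (-y)) (Ioi 0) := by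
  have h := exp_neg_integrableOn_Ioi (0:ℝ) (b := 1) one_pos
  refine h.congr_fun (fun x _ => ?_) measurableSet_Ioi
  norm_num

lemma int_g1 {b : ℝ} (hb : 0 < b) :
    IntegrableOn (fun y : ℝ => Real.exp (-y) * Real.log (1 + b * y)) (Ioi 0) := by
  refine Integrable.mono ((int_xexp.const_mul b)) ?_ ?_
  · exact ((Real.measurable_exp.comp measurable_neg).mul
      (Real.measurable_log.comp ((measurable_id.const_mul b).const_add 1))).aestronglyMeasurable
  · filter_upwards [ae_restrict_mem measurableSet_Ioi] with y hy
    simp only [mem_Ioi] at hy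
    have h1 : (0:ℝ) < 1 + b * y := by nlinarith
    have hlog0 : 0 ≤ Real.log (1 + b * y) := Real.log_nonneg (by nlinarith)
    have hlog : Real.log (1 + b * y) ≤ b * y := by
      have := Real.log_le_sub_one_of_pos h1
      linarith
    rw [Real.norm_eq_abs, Real.norm_eq_abs, abs_of_nonneg (by positivity),
      abs_of_nonneg (by positivity)]
    calc Real.exp (-y) * Real.log (1 + b * y) ≤ Real.exp (-y) * (b * y) := by
          exact mul_le_mul_of_nonneg_left hlog (Real.exp_pos _).le
      _ = b * (y * Real.exp (-y)) := by ring

lemma int_g2 {b : ℝ} (hb : 0 < b) :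
    IntegrableOn (fun y : ℝ => Real.exp (-y) * (b / (1 + b * y))) (Ioi 0) := by
  refine Integrable.mono (int_exp.const_mul b) ?_ ?_
  · exact ((Real.measurable_exp.comp measurable_neg).mul
      (measurable_const.div ((measurable_id.const_mul b).const_add 1))).aestronglyMeasurable
  · filter_upwards [ae_restrict_mem measurableSet_Ioi] with y hy
    simp only [mem_Ioi] at hy
    have h1 : (1:ℝ) ≤ 1 + b * y := by nlinarith
    have h0 : (0:ℝ) < 1 + b * y := by linarith
    have hd : b / (1 + b * y) ≤ b := by
      rw [div_le_iff₀ h0]; nlinarith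
    rw [Real.norm_eq_abs, Real.norm_eq_abs, abs_of_nonneg (by positivity),
      abs_of_nonneg (by positivity)]
    calc Real.exp (-y) * (b / (1 + b * y)) ≤ Real.exp (-y) * b :=
          mul_le_mul_of_nonneg_left hd (Real.exp_pos _).le
      _ = b * Real.exp (-y) := by ring

lemma lemB {b : ℝ} (hb : 0 < b) :
    ∫ y in Ioi (0:ℝ), Real.exp (-y) * Real.log (1 + b * y)
      = ∫ y in Ioi (0:ℝ), Real.exp (-y) * (b / (1 + b * y)) := by
  set f : ℝ → ℝ := fun y => -(Real.exp (-y) * Real.log (1 + b * y)) with hf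
  set f' : ℝ → ℝ := fun y => Real.exp (-y) * Real.log (1 + b * y)
      - Real.exp (-y) * (b / (1 + b * y)) with hf'
  have hderiv : ∀ y ∈ Ici (0:ℝ), HasDerivAt f (f' y) y := by
    intro y hy
    simp only [mem_Ici] at hy
    have h1 : (0:ℝ) < 1 + b * y := by nlinarith
    have he : HasDerivAt (fun y : ℝ => Real.exp (-y)) (-Real.exp (-y)) y := by
      simpa using (hasDerivAt_neg y).exp
    have hl : HasDerivAt (fun y : ℝ => Real.log (1 + b * y)) (b / (1 + b * y)) y := by
      have hlin : HasDerivAt (fun y : ℝ => 1 + b * y) b y := by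
        simpa using ((hasDerivAt_id y).const_mul b).const_add 1
      simpa using hlin.log h1.ne'
    have := (he.mul hl).neg
    refine this.congr_deriv ?_
    simp only [hf']
    ring
  have htend : Filter.Tendsto f Filter.atTop (nhds 0) := by
    rw [show (0:ℝ) = -0 by norm_num]
    apply Filter.Tendsto.neg
    apply squeeze_zero' (g := fun y => b * (y * Real.exp (-y)))
    · filter_upwards [Filter.eventually_ge_atTop (0:ℝ)] with y hy
      have : (1:ℝ) ≤ 1 + b * y := by nlinarith
      exact mul_nonneg (Real.exp_pos _).le (Real.log_nonneg this)
    · filter_upwards [Filter.eventually_ge_atTop (0:ℝ)] with y hy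
      have h1 : (0:ℝ) < 1 + b * y := by nlinarith
      have hlog : Real.log (1 + b * y) ≤ b * y := by
        have := Real.log_le_sub_one_of_pos h1; linarith
      calc Real.exp (-y) * Real.log (1 + b * y) ≤ Real.exp (-y) * (b * y) :=
            mul_le_mul_of_nonneg_left hlog (Real.exp_pos _).le
        _ = b * (y * Real.exp (-y)) := by ring
    · have := (Real.tendsto_pow_mul_exp_neg_atTop_nhds_zero 1).const_mul b
      simpa using this
  have hint : IntegrableOn f' (Ioi 0) := (int_g1 hb).sub (int_g2 hb)
  have := integral_Ioi_of_hasDerivAt_of_tendsto' hderiv hint htend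
  have hf0 : f 0 = 0 := by simp [hf]
  rw [hf0, sub_zero] at this
  have hsplit := integral_sub (int_g1 hb) (int_g2 hb)
  simp only [hf'] at this
  rw [hsplit] at this
  linarith

lemma lemC {b : ℝ} (hb : 0 < b) :
    ∫ y in Ioi (0:ℝ), Real.exp (-y) * (b / (1 + b * y))
      = -(Real.exp (1/b) * Ei (-(1/b))) := by
  have himg : (fun z : ℝ => z / b) '' Ioi (0:ℝ) = Ioi 0 := by
    ext t
    constructor
    · rintro ⟨z, hz, rfl⟩
      simp only [mem_Ioi] at hz ⊢
      positivity
    · intro ht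
      simp only [mem_Ioi] at ht
      exact ⟨t * b, by simp only [mem_Ioi]; positivity, by field_simp⟩
  have hderiv : ∀ z ∈ Ioi (0:ℝ), HasDerivWithinAt (fun z : ℝ => z / b) (1/b) (Ioi 0) z := by
    intro z _
    simpa [div_eq_mul_inv] using ((hasDerivAt_id z).mul_const b⁻¹).hasDerivWithinAt
  have hinj : InjOn (fun z : ℝ => z / b) (Ioi 0) := fun a _ c _ h => by
    field_simp at h; exact h
  have hcov := integral_image_eq_integral_abs_deriv_smul measurableSet_Ioi hderiv hinj
      (fun y => Real.exp (-y) * (b / (1 + b * y)))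
  rw [himg] at hcov
  rw [hcov]
  have h1b : (0:ℝ) < 1/b := by positivity
  have hlA := lemA (1/b) h1b
  rw [show -(Real.exp (1/b) * Ei (-(1/b))) = -Real.exp (1/b) * Ei (-(1/b)) by ring, ← hlA]
  refine setIntegral_congr_fun measurableSet_Ioi (fun z hz => ?_)
  simp only [mem_Ioi] at hz
  rw [abs_of_pos h1b, smul_eq_mul]
  have hz1 : (0:ℝ) < 1 + b * (z / b) := by
    rw [mul_div_cancel₀ _ hb.ne']; linarith
  rw [show -(z / b) = -(1/b * z) by ring]
  rw [mul_div_cancel₀ _ hb.ne']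
  field_simp
  ring

lemma lemD {A x : ℝ} (hA : 0 < A) (hx : 0 < x) :
    ∫ y in Ioi (0:ℝ), Real.exp (-y) * Real.log (1 + 1/A * (x * y))
      = -(Real.exp (A/x) * Ei (-(A/x))) := by
  have hb : 0 < x / A := by positivity
  have h1 : ∀ y : ℝ, 1 + 1/A * (x * y) = 1 + (x/A) * y := fun y => by ring
  simp_rw [h1]
  rw [lemB hb, lemC hb, one_div_div]

lemma lemE {A : ℝ} (hA : 0 < A) :
    ∫ x in Ioi (0:ℝ), Real.exp (-x) * (-(Real.exp (A/x) * Ei (-(A/x))))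
      = -∫ x in Ioi (0:ℝ), x ^ (-(2:ℝ)) * Real.exp (A * x - 1 / x) * Ei (-(A * x)) := by
  have himg : (fun u : ℝ => u⁻¹) '' Ioi (0:ℝ) = Ioi 0 := by
    ext t
    constructor
    · rintro ⟨z, hz, rfl⟩
      simp only [mem_Ioi] at hz ⊢
      positivity
    · intro ht
      simp only [mem_Ioi] at ht
      exact ⟨t⁻¹, by simp only [mem_Ioi]; positivity, by simp⟩
  have hderiv : ∀ u ∈ Ioi (0:ℝ), HasDerivWithinAt (fun u : ℝ => u⁻¹) (-(u^2)⁻¹) (Ioi 0) u :=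
    fun u hu => (hasDerivAt_inv (ne_of_gt hu)).hasDerivWithinAt
  have hinj : InjOn (fun u : ℝ => u⁻¹) (Ioi 0) := fun a _ c _ h => by
    simpa using congrArg (·⁻¹) h
  have hcov := integral_image_eq_integral_abs_deriv_smul measurableSet_Ioi hderiv hinj
      (fun x => Real.exp (-x) * (-(Real.exp (A/x) * Ei (-(A/x)))))
  rw [himg] at hcov
  rw [hcov, ← integral_neg]
  refine setIntegral_congr_fun measurableSet_Ioi (fun u hu => ?_)
  simp only [mem_Ioi] at hu
  rw [smul_eq_mul, abs_neg, abs_of_pos (by positivity : (0:ℝ) < (u^2)⁻¹)]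
  have h1 : A / u⁻¹ = A * u := by field_simp
  have h2 : -u⁻¹ = -(1/u) := by rw [one_div]
  have h3 : u ^ (-(2:ℝ)) = (u^2)⁻¹ := by
    rw [Real.rpow_neg hu.le, show ((2:ℝ)) = ((2:ℕ):ℝ) by norm_num, Real.rpow_natCast]
  have h4 : Real.exp (A * u - 1/u) = Real.exp (A*u) * Real.exp (-(1/u)) := by
    rw [← Real.exp_add]; ring_nf
  rw [h1, h2, h3, h4]
  ring

lemma expDensity_nonneg (x : ℝ) : 0 ≤ expDensity x := by
  unfold expDensity; split_ifs <;> positivity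

lemma measurable_expDensity : Measurable expDensity := by
  unfold expDensity
  exact Measurable.ite measurableSet_Ioi (Real.measurable_exp.comp measurable_neg)
    measurable_const

lemma integral_expMeasure (g : ℝ → ℝ) :
    ∫ x, g x ∂(volume.withDensity fun x => ENNReal.ofReal (expDensity x))
      = ∫ x in Ioi (0:ℝ), Real.exp (-x) * g x := by
  have h1 : (fun x : ℝ => ENNReal.ofReal (expDensity x))
      = fun x => ((expDensity x).toNNReal : ENNReal) := rfl
  rw [h1, integral_withDensity_eq_integral_smul measurable_expDensity.real_toNNReal g]
  rw [← integral_indicator measurableSet_Ioi]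
  congr 1
  ext x
  rw [NNReal.smul_def, Real.coe_toNNReal _ (expDensity_nonneg x)]
  unfold expDensity
  by_cases h : 0 < x <;> simp [indicator, h]

lemma stmt_main {Ω : Type*} [MeasureSpace Ω] [IsProbabilityMeasure (ℙ : Measure Ω)]
    (X Y : Ω → ℝ) (hX : Measurable X) (hY : Measurable Y)
    (hXlaw : Measure.map X ℙ = volume.withDensity (fun x => ENNReal.ofReal (expDensity x)))
    (hYlaw : Measure.map Y ℙ = volume.withDensity (fun x => ENNReal.ofReal (expDensity x)))
    (hindep : ProbabilityTheory.IndepFun X Y ℙ) (A : ℝ) (hA : 0 < A) :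
    ∫ ω, Real.log (1 + (1 / A) * (X ω * Y ω)) ∂ℙ =
      -∫ x in Ioi (0:ℝ),
          x ^ (-(2:ℝ)) * Real.exp (A * x - 1 / x) * Ei (-(A * x)) := by
  set μ : Measure ℝ := volume.withDensity fun x => ENNReal.ofReal (expDensity x) with hμ
  have hμprob : IsProbabilityMeasure μ := by
    rw [← hXlaw]; exact Measure.isProbabilityMeasure_map hX.aemeasurable
  set g : ℝ × ℝ → ℝ := fun p => Real.log (1 + 1/A * (p.1 * p.2)) with hg
  have hgmeas : Measurable g :=
    Real.measurable_log.comp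
      (measurable_const.add ((measurable_fst.mul measurable_snd).const_mul (1/A)))
  have hXY : Measure.map (fun ω => (X ω, Y ω)) ℙ = μ.prod μ := by
    rw [(ProbabilityTheory.indepFun_iff_map_prod_eq_prod_map_map hX.aemeasurable
      hY.aemeasurable).mp hindep, hXlaw, hYlaw]
  have hdmeas : Measurable fun x : ℝ => ENNReal.ofReal (expDensity x) :=
    measurable_expDensity.ennreal_ofReal
  have hid : Integrable (fun x : ℝ => x) μ := by
    rw [hμ, integrable_withDensity_iff hdmeas (ae_of_all _ fun x => ENNReal.ofReal_lt_top)]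
    have heq : (fun x : ℝ => x * (ENNReal.ofReal (expDensity x)).toReal)
        = Set.indicator (Ioi 0) (fun x => x * Real.exp (-x)) := by
      ext x
      rw [ENNReal.toReal_ofReal (expDensity_nonneg x)]
      unfold expDensity
      by_cases h : 0 < x <;> simp [indicator, h]
    rw [heq, integrable_indicator_iff measurableSet_Ioi]
    exact int_xexp
  have hbound : Integrable (fun p : ℝ × ℝ => 1/A * (p.1 * p.2)) (μ.prod μ) :=
    (hid.mul_prod hid).const_mul _
  have hae1 : ∀ᵐ p ∂(μ.prod μ), 0 < p.1 := by
    rw [ae_iff]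
    have hset : {p : ℝ × ℝ | ¬ 0 < p.1} = {x : ℝ | ¬ 0 < x} ×ˢ (univ : Set ℝ) := by
      ext p; simp [mem_prod]
    have hμ0 : μ {x : ℝ | ¬ 0 < x} = 0 := by
      have : {x : ℝ | ¬ 0 < x} = Iic 0 := by ext x; simp [not_lt]
      rw [this, hμ, withDensity_apply _ measurableSet_Iic]
      have hz : ∫⁻ x in Iic (0:ℝ), ENNReal.ofReal (expDensity x) = ∫⁻ _ in Iic (0:ℝ), 0 :=
        setLIntegral_congr_fun measurableSet_Iic (fun x (hx : x ∈ Iic 0) => by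
          simp [expDensity, not_lt.mpr (mem_Iic.mp hx)])
      simpa using hz
    rw [hset, Measure.prod_prod, hμ0, zero_mul]
  have hae2 : ∀ᵐ p ∂(μ.prod μ), 0 < p.2 := by
    rw [ae_iff]
    have hset : {p : ℝ × ℝ | ¬ 0 < p.2} = (univ : Set ℝ) ×ˢ {x : ℝ | ¬ 0 < x} := by
      ext p; simp [mem_prod]
    have hμ0 : μ {x : ℝ | ¬ 0 < x} = 0 := by
      have : {x : ℝ | ¬ 0 < x} = Iic 0 := by ext x; simp [not_lt]
      rw [this, hμ, withDensity_apply _ measurableSet_Iic]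
      have hz : ∫⁻ x in Iic (0:ℝ), ENNReal.ofReal (expDensity x) = ∫⁻ _ in Iic (0:ℝ), 0 :=
        setLIntegral_congr_fun measurableSet_Iic (fun x (hx : x ∈ Iic 0) => by
          simp [expDensity, not_lt.mpr (mem_Iic.mp hx)])
      simpa using hz
    rw [hset, Measure.prod_prod, hμ0, mul_zero]
  have hgint : Integrable g (μ.prod μ) := by
    refine hbound.mono hgmeas.aestronglyMeasurable ?_
    filter_upwards [hae1, hae2] with p hp1 hp2
    have hpos : 0 < 1/A * (p.1 * p.2) := by positivity
    rw [Real.norm_eq_abs, Real.norm_eq_abs,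
      abs_of_nonneg (Real.log_nonneg (by linarith)), abs_of_pos hpos]
    have := Real.log_le_sub_one_of_pos (show (0:ℝ) < 1 + 1/A * (p.1 * p.2) by linarith)
    linarith
  calc ∫ ω, Real.log (1 + (1 / A) * (X ω * Y ω)) ∂ℙ
      = ∫ p, g p ∂(μ.prod μ) := by
        rw [← hXY]
        exact (integral_map (hX.prodMk hY).aemeasurable hgmeas.aestronglyMeasurable).symm
    _ = ∫ x, (∫ y, g (x, y) ∂μ) ∂μ := integral_prod g hgint
    _ = ∫ x in Ioi (0:ℝ), Real.exp (-x) * ∫ y, g (x, y) ∂μ := integral_expMeasure _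
    _ = ∫ x in Ioi (0:ℝ), Real.exp (-x) * (-(Real.exp (A/x) * Ei (-(A/x)))) := by
        refine setIntegral_congr_fun measurableSet_Ioi (fun x hx => ?_)
        simp only [mem_Ioi] at hx
        congr 1
        rw [hμ, integral_expMeasure]
        exact lemD hA hx
    _ = -∫ x in Ioi (0:ℝ),
          x ^ (-(2:ℝ)) * Real.exp (A * x - 1 / x) * Ei (-(A * x)) := lemE hA

theorem stmt_11 {Ω : Type*} [MeasureSpace Ω] [IsProbabilityMeasure (ℙ : Measure Ω)]
    (X Y : Ω → ℝ) (hX : Measurable X) (hY : Measurable Y)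
    (hXlaw : Measure.map X ℙ = volume.withDensity (fun x => ENNReal.ofReal (expDensity x)))
    (hYlaw : Measure.map Y ℙ = volume.withDensity (fun x => ENNReal.ofReal (expDensity x)))
    (hindep : IndepFun X Y ℙ) (A : ℝ) (hA : 0 < A) :
    (∫ ω, Real.log (1 + (1 / A) * (X ω * Y ω)) ∂ℙ =
      -∫ x in Ioi (0:ℝ),
          x ^ (-(2:ℝ)) * Real.exp (A * x - 1 / x) * Ei (-(A * x))) ∧
    ∀ c : ℝ, 0 < c →
      ∫ z in Ioi (0:ℝ), Real.exp (-(c * z)) / (z + 1) = -Real.exp c * Ei (-c) := by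
  exact ⟨stmt_main X Y hX hY hXlaw hYlaw hindep A hA, fun c hc => lemA c hc⟩
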